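/- For every prime p, the map φ_p : ℤ_p → ℤ_p defined by φ_p(α) = (α^p − α)/p is well defined, surjective, and exactly p-to-1: every β ∈ ℤ_p has exactly p preimages in ℤ_p under φ_p. -/

import Mathlib

open PadicInt Polynomial

lemma toZMod_eq_zero_iff_dvd' (p : ℕ) [Fact p.Prime] (x : ℤ_[p]) :
    PadicInt.toZMod x = 0 ↔ (p : ℤ_[p]) ∣ x := by
  rw [← RingHom.mem_ker, PadicInt.ker_toZMod, PadicInt.maximalIdeal_eq_span_p,
    Ideal.mem_span_singleton]

lemma key_root (p : ℕ) [Fact p.Prime] (β : ℤ_[p]) (a : ZMod p) :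
    ∃! z : ℤ_[p], z ^ p - z = p * β ∧ PadicInt.toZMod z = a := by
  have hp : p.Prime := Fact.out
  set F : Polynomial ℤ_[p] := X ^ p - X - C (p * β) with hF
  have hevalF : ∀ z : ℤ_[p], F.eval z = z ^ p - z - p * β := by
    intro z; simp [hF]
  have hderF : ∀ z : ℤ_[p], F.derivative.eval z = p * z ^ (p - 1) - 1 := by
    intro z
    simp [hF, Polynomial.derivative_pow]
  have hdernorm : ∀ z : ℤ_[p], ‖F.derivative.eval z‖ = 1 := by
    intro z
    refine le_antisymm (PadicInt.norm_le_one _) ?_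
    rcases lt_or_ge ‖F.derivative.eval z‖ 1 with h | h
    · exfalso
      rw [PadicInt.norm_lt_one_iff_dvd, ← toZMod_eq_zero_iff_dvd'] at h
      rw [hderF] at h
      simp only [map_sub, map_mul, map_one, map_pow, map_natCast, ZMod.natCast_self,
        zero_mul, zero_sub, neg_eq_zero] at h
      exact one_ne_zero h
    · exact h
  set a₀ : ℤ_[p] := ((a.val : ℕ) : ℤ_[p]) with ha₀
  have htoa₀ : PadicInt.toZMod a₀ = a := by
    rw [ha₀]
    simp [ZMod.natCast_val, ZMod.cast_id]
  have hnorm : ‖F.eval a₀‖ < ‖F.derivative.eval a₀‖ ^ 2 := by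
    rw [hdernorm, one_pow, PadicInt.norm_lt_one_iff_dvd, ← toZMod_eq_zero_iff_dvd', hevalF]
    simp [htoa₀, ZMod.pow_card]
  obtain ⟨z, hz0, hzdist, -, huniq⟩ := hensels_lemma hnorm
  have hres : ∀ z' : ℤ_[p], PadicInt.toZMod z' = a ↔ ‖z' - a₀‖ < 1 := by
    intro z'
    rw [PadicInt.norm_lt_one_iff_dvd, ← toZMod_eq_zero_iff_dvd', map_sub, htoa₀,
      sub_eq_zero]
  refine ⟨z, ⟨?_, ?_⟩, ?_⟩
  · have := hz0; rw [Polynomial.coe_aeval_eq_eval, hevalF, sub_eq_zero] at this; exact this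
  · rw [hres]; rwa [Polynomial.coe_aeval_eq_eval, hdernorm a₀] at hzdist
  · rintro z' ⟨h1, h2⟩
    refine huniq z' ?_ ?_
    · rw [Polynomial.coe_aeval_eq_eval, hevalF, h1, sub_self]
    · rw [Polynomial.coe_aeval_eq_eval, hdernorm a₀]; exact (hres z').1 h2

theorem phi_p_well_defined_surjective_p_to_one (p : ℕ) [Fact p.Prime] :
    (∀ α : ℤ_[p], ∃ γ : ℤ_[p], (γ : ℚ_[p]) = ((α : ℚ_[p]) ^ p - (α : ℚ_[p])) / p) ∧
    (∀ β : ℤ_[p], ∃ α : ℤ_[p], ((α : ℚ_[p]) ^ p - (α : ℚ_[p])) / p = (β : ℚ_[p])) ∧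
    (∀ β : ℤ_[p],
      {α : ℤ_[p] | ((α : ℚ_[p]) ^ p - (α : ℚ_[p])) / p = (β : ℚ_[p])}.ncard = p) := by
  have hp : p.Prime := Fact.out
  have hp0 : (p : ℚ_[p]) ≠ 0 := Nat.cast_ne_zero.mpr hp.ne_zero
  have heq : ∀ α β : ℤ_[p],
      ((α : ℚ_[p]) ^ p - (α : ℚ_[p])) / p = (β : ℚ_[p]) ↔ α ^ p - α = p * β := by
    intro α β
    rw [div_eq_iff hp0]
    constructor
    · intro h
      have h' : ((α ^ p - α : ℤ_[p]) : ℚ_[p]) = ((p * β : ℤ_[p]) : ℚ_[p]) := by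
        push_cast
        rw [h]; ring
      exact Subtype.coe_injective h'
    · intro h
      have h' : ((α ^ p - α : ℤ_[p]) : ℚ_[p]) = ((p * β : ℤ_[p]) : ℚ_[p]) := by
        exact_mod_cast congrArg _ h
      push_cast at h'
      rw [h']; ring
  refine ⟨?_, ?_, ?_⟩
  · intro α
    have hdvd : (p : ℤ_[p]) ∣ α ^ p - α := by
      rw [← toZMod_eq_zero_iff_dvd']
      simp [ZMod.pow_card]
    obtain ⟨c, hc⟩ := hdvd
    refine ⟨c, ?_⟩
    rw [eq_div_iff hp0]
    have h' : ((α ^ p - α : ℤ_[p]) : ℚ_[p]) = (((p : ℤ_[p]) * c : ℤ_[p]) : ℚ_[p]) := by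
      exact_mod_cast congrArg _ hc
    push_cast at h'
    rw [mul_comm]; exact h'.symm
  · intro β
    obtain ⟨z, ⟨hz, -⟩, -⟩ := key_root p β 0
    exact ⟨z, (heq z β).mpr hz⟩
  · intro β
    have hset : {α : ℤ_[p] | ((α : ℚ_[p]) ^ p - (α : ℚ_[p])) / p = (β : ℚ_[p])} =
        {α : ℤ_[p] | α ^ p - α = p * β} := by
      ext α; exact heq α β
    rw [hset]
    choose f hf huniq using fun a : ZMod p => key_root p β a
    have hrange : {α : ℤ_[p] | α ^ p - α = p * β} = Set.range f := by
      ext α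
      constructor
      · intro hα
        exact ⟨PadicInt.toZMod α, (huniq (PadicInt.toZMod α) α ⟨hα, rfl⟩).symm⟩
      · rintro ⟨a, rfl⟩
        exact (hf a).1
    have hinj : Function.Injective f := by
      intro a b hab
      rw [← (hf a).2, ← (hf b).2, hab]
    rw [hrange, ← Set.image_univ, Set.ncard_image_of_injective _ hinj, Set.ncard_univ,
      Nat.card_eq_fintype_card, ZMod.card]
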